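/- The Bing space B is a Hausdorff topological space. -/

import Mathlib

/-- A point of the Bing space: a rational pair `(x, y)` with `0 ≤ y`. -/
structure BingPt where
  x : ℚ
  y : ℚ
  hy : 0 ≤ y

/-- The pair of base "intervals" attached to the point `(a,b)`:
rational points `(x,0)` with `|x - (a - b/√3)| < ε` or `|x - (a + b/√3)| < ε`. -/
def wedge (a b : ℚ) (ε : ℝ) : Set BingPt :=
  {z : BingPt | z.y = 0 ∧ (|(z.x : ℝ) - ((a : ℝ) - (b : ℝ) / Real.sqrt 3)| < ε ∨
    |(z.x : ℝ) - ((a : ℝ) + (b : ℝ) / Real.sqrt 3)| < ε)}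

/-- A set `U` is Bing-open if each of its points `(a,b)` admits `ε > 0`
with the corresponding base intervals contained in `U`. -/
def BingOpen (U : Set BingPt) : Prop :=
  ∀ z ∈ U, ∃ ε : ℝ, 0 < ε ∧ wedge z.x z.y ε ⊆ U

/-- The Bing topology. -/
instance : TopologicalSpace BingPt where
  IsOpen := BingOpen
  isOpen_univ := fun _ _ => ⟨1, one_pos, fun _ _ => trivial⟩
  isOpen_inter := by
    intro U V hU hV z hz
    obtain ⟨ε1, hε1, h1⟩ := hU z hz.1
    obtain ⟨ε2, hε2, h2⟩ := hV z hz.2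
    refine ⟨min ε1 ε2, lt_min hε1 hε2, fun w hw => ⟨h1 ⟨hw.1, ?_⟩, h2 ⟨hw.1, ?_⟩⟩⟩
    · exact hw.2.imp (fun h => h.trans_le (min_le_left _ _)) (fun h => h.trans_le (min_le_left _ _))
    · exact hw.2.imp (fun h => h.trans_le (min_le_right _ _)) (fun h => h.trans_le (min_le_right _ _))
  isOpen_sUnion := by
    intro S hS z hz
    obtain ⟨U, hU, hzU⟩ := hz
    obtain ⟨ε, hε, h⟩ := hS U hU z hzU
    exact ⟨ε, hε, fun w hw => ⟨U, hU, h hw⟩⟩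

lemma ratpair (q r : ℚ) (h : (q:ℝ) + (r:ℝ) / Real.sqrt 3 = 0) : q = 0 ∧ r = 0 := by
  have h3 : Irrational (Real.sqrt 3) := by
    simpa using (Nat.prime_three.irrational_sqrt)
  by_cases hr : r = 0
  · subst hr; simp at h; exact ⟨by exact_mod_cast h, rfl⟩
  · exfalso
    have : Irrational ((r:ℝ) / Real.sqrt 3) := h3.ratCast_div hr
    have heq : ((-q : ℚ) : ℝ) = (r:ℝ) / Real.sqrt 3 := by push_cast; linarith
    exact this ⟨-q, heq⟩

lemma sqrt3_pos : (0:ℝ) < Real.sqrt 3 := Real.sqrt_pos.mpr (by norm_num)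

/-- the four associated reals of distinct points are distinct -/
lemma wedge_ne {a1 b1 a2 b2 : ℚ} (hb1 : 0 ≤ b1) (hb2 : 0 ≤ b2)
    (hne : ¬(a1 = a2 ∧ b1 = b2)) (u v : ℝ)
    (hu : u = -((b1:ℝ)/Real.sqrt 3) ∨ u = (b1:ℝ)/Real.sqrt 3)
    (hv : v = -((b2:ℝ)/Real.sqrt 3) ∨ v = (b2:ℝ)/Real.sqrt 3) :
    (a1:ℝ) + u ≠ (a2:ℝ) + v := by
  have h3 := sqrt3_pos.ne'
  intro heq
  rcases hu with hu | hu <;> rcases hv with hv | hv <;> subst hu hv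
  · have := ratpair (a1 - a2) (b2 - b1) (by push_cast; field_simp at heq ⊢; linarith)
    exact hne ⟨by linarith [this.1], by linarith [this.2]⟩
  · have := ratpair (a1 - a2) (-(b1 + b2)) (by push_cast; field_simp at heq ⊢; linarith)
    have h1 := this.1; have h2 := this.2
    exact hne ⟨by linarith, by linarith⟩
  · have := ratpair (a1 - a2) (b1 + b2) (by push_cast; field_simp at heq ⊢; linarith)
    have h1 := this.1; have h2 := this.2
    exact hne ⟨by linarith, by linarith⟩
  · have := ratpair (a1 - a2) (b1 - b2) (by push_cast; field_simp at heq ⊢; linarith)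
    exact hne ⟨by linarith [this.1], by linarith [this.2]⟩

/-- basic neighborhood -/
lemma nbhd_open (z : BingPt) (ε : ℝ) (hε : 0 < ε) :
    IsOpen (insert z (wedge z.x z.y ε)) := by
  intro w hw
  rcases hw with rfl | hw
  · exact ⟨ε, hε, fun v hv => Or.inr hv⟩
  · obtain ⟨hy0, hx⟩ := hw
    rcases hx with hx | hx
    · refine ⟨ε - |(w.x:ℝ) - ((z.x:ℝ) - (z.y:ℝ)/Real.sqrt 3)|, by linarith, fun v hv => ?_⟩
      refine Or.inr ⟨hv.1, Or.inl ?_⟩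
      have h1 : |(v.x:ℝ) - (w.x:ℝ)| < ε - |(w.x:ℝ) - ((z.x:ℝ) - (z.y:ℝ)/Real.sqrt 3)| := by
        rcases hv.2 with h | h <;> · rw [hy0] at h; simpa using h
      calc |(v.x:ℝ) - ((z.x:ℝ) - (z.y:ℝ)/Real.sqrt 3)|
          ≤ |(v.x:ℝ) - (w.x:ℝ)| + |(w.x:ℝ) - ((z.x:ℝ) - (z.y:ℝ)/Real.sqrt 3)| := abs_sub_le _ _ _
        _ < ε := by linarith
    · refine ⟨ε - |(w.x:ℝ) - ((z.x:ℝ) + (z.y:ℝ)/Real.sqrt 3)|, by linarith, fun v hv => ?_⟩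
      refine Or.inr ⟨hv.1, Or.inr ?_⟩
      have h1 : |(v.x:ℝ) - (w.x:ℝ)| < ε - |(w.x:ℝ) - ((z.x:ℝ) + (z.y:ℝ)/Real.sqrt 3)| := by
        rcases hv.2 with h | h <;> · rw [hy0] at h; simpa using h
      calc |(v.x:ℝ) - ((z.x:ℝ) + (z.y:ℝ)/Real.sqrt 3)|
          ≤ |(v.x:ℝ) - (w.x:ℝ)| + |(w.x:ℝ) - ((z.x:ℝ) + (z.y:ℝ)/Real.sqrt 3)| := abs_sub_le _ _ _
        _ < ε := by linarith

lemma sep_aux {c1 c2 x ε : ℝ} (h : 2*ε ≤ |c1 - c2|) (h1 : |x - c1| < ε) (h2 : |x - c2| < ε) :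
    False := by
  have : |c1 - c2| ≤ |x - c1| + |x - c2| := by
    calc |c1 - c2| = |(x - c2) - (x - c1)| := by ring_nf
      _ ≤ |x - c2| + |x - c1| := abs_sub _ _
      _ = |x - c1| + |x - c2| := by ring
  linarith

/-- The Bing space is Hausdorff. -/
theorem bing_t2 : T2Space BingPt := by
  constructor
  intro z1 z2 hzne
  set c1m : ℝ := (z1.x:ℝ) - (z1.y:ℝ)/Real.sqrt 3 with hc1m
  set c1p : ℝ := (z1.x:ℝ) + (z1.y:ℝ)/Real.sqrt 3 with hc1p
  set c2m : ℝ := (z2.x:ℝ) - (z2.y:ℝ)/Real.sqrt 3 with hc2m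
  set c2p : ℝ := (z2.x:ℝ) + (z2.y:ℝ)/Real.sqrt 3 with hc2p
  have hne : ¬(z1.x = z2.x ∧ z1.y = z2.y) := by
    rintro ⟨h1, h2⟩
    exact hzne (by cases z1; cases z2; simp_all)
  have key : ∀ u v : ℝ,
      (u = -((z1.y:ℝ)/Real.sqrt 3) ∨ u = (z1.y:ℝ)/Real.sqrt 3) →
      (v = -((z2.y:ℝ)/Real.sqrt 3) ∨ v = (z2.y:ℝ)/Real.sqrt 3) →
      (z1.x:ℝ) + u ≠ (z2.x:ℝ) + v :=
    fun u v hu hv => wedge_ne z1.hy z2.hy hne u v hu hv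
  have hmm : c1m ≠ c2m := by
    have := key _ _ (Or.inl rfl) (Or.inl rfl); rw [hc1m, hc2m]; intro h; exact this (by linarith)
  have hmp : c1m ≠ c2p := by
    have := key _ _ (Or.inl rfl) (Or.inr rfl); rw [hc1m, hc2p]; intro h; exact this (by linarith)
  have hpm : c1p ≠ c2m := by
    have := key _ _ (Or.inr rfl) (Or.inl rfl); rw [hc1p, hc2m]; intro h; exact this (by linarith)
  have hpp : c1p ≠ c2p := by
    have := key _ _ (Or.inr rfl) (Or.inr rfl); rw [hc1p, hc2p]; intro h; exact this (by linarith)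
  set d : ℝ := min (min |c1m - c2m| |c1m - c2p|) (min |c1p - c2m| |c1p - c2p|) with hd
  have hdpos : 0 < d := by
    apply lt_min (lt_min _ _) (lt_min _ _) <;> exact abs_pos.mpr (sub_ne_zero.mpr ‹_›)
  set ε : ℝ := d / 2 with hε
  have hεpos : 0 < ε := by positivity
  have hd1 : d ≤ |c1m - c2m| := (min_le_left _ _).trans (min_le_left _ _)
  have hd2 : d ≤ |c1m - c2p| := (min_le_left _ _).trans (min_le_right _ _)
  have hd3 : d ≤ |c1p - c2m| := (min_le_right _ _).trans (min_le_left _ _)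
  have hd4 : d ≤ |c1p - c2p| := (min_le_right _ _).trans (min_le_right _ _)
  refine ⟨insert z1 (wedge z1.x z1.y ε), insert z2 (wedge z2.x z2.y ε),
    nbhd_open _ _ hεpos, nbhd_open _ _ hεpos, Set.mem_insert _ _, Set.mem_insert _ _, ?_⟩
  rw [Set.disjoint_left]
  rintro w (rfl | ⟨hwy1, hwx1⟩) hw2
  · rcases hw2 with rfl | ⟨hy0, hx⟩
    · exact hzne rfl
    · have hy0' : ((w.y : ℝ)) = 0 := by exact_mod_cast hy0
      have e1 : c1m = (w.x : ℝ) := by rw [hc1m, hy0']; simp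
      have e2 : c1p = (w.x : ℝ) := by rw [hc1p, hy0']; simp
      rcases hx with h | h
      · have : |c1m - c2m| < ε := by rw [e1]; simpa using h
        linarith
      · have : |c1m - c2p| < ε := by rw [e1]; simpa using h
        linarith
  · rcases hw2 with rfl | ⟨hy0, hx⟩
    · have hy0' : ((w.y : ℝ)) = 0 := by exact_mod_cast hwy1
      have e1 : c2m = (w.x : ℝ) := by rw [hc2m, hy0']; simp
      rcases hwx1 with h | h
      · have : |c2m - c1m| < ε := by rw [e1]; simpa [abs_sub_comm] using h
        rw [abs_sub_comm] at this; linarith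
      · have : |c2m - c1p| < ε := by rw [e1]; simpa [abs_sub_comm] using h
        rw [abs_sub_comm] at this; linarith
    · rcases hwx1 with h1 | h1 <;> rcases hx with h2 | h2
      · exact sep_aux (show 2*ε ≤ |c1m - c2m| by linarith) h1 h2
      · exact sep_aux (show 2*ε ≤ |c1m - c2p| by linarith) h1 h2
      · exact sep_aux (show 2*ε ≤ |c1p - c2m| by linarith) h1 h2
      · exact sep_aux (show 2*ε ≤ |c1p - c2p| by linarith) h1 h2
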